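/- Let γ > 0, C > 0 and z ∈ ℝ with either z ≤ 0 or z > √(2γC). Then u = z is the unique global minimizer over ℝ of the function φ(u) = γC·χ(u) + (1/2)(u − z)², where χ(u) = 1 if u > 0 and χ(u) = 0 if u ≤ 0. -/
import Mathlib


/-- The scalar `L_{0/1}` proximal objective
`φ(u) = γC·χ(u) + (1/2)(u − z)²`, where `χ(u) = 1` if `u > 0` and `0` otherwise. -/
noncomputable def scalarProxObj (γ C z u : ℝ) : ℝ :=
  γ * C * (if 0 < u then (1 : ℝ) else 0) + (1 / 2) * (u - z) ^ 2

lemma scalarProxObj_nonneg (γ C z u : ℝ) (hγ : 0 < γ) (hC : 0 < C) :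
    0 ≤ scalarProxObj γ C z u := by
  unfold scalarProxObj
  have : (0:ℝ) ≤ γ * C * (if 0 < u then (1:ℝ) else 0) := by
    split <;> positivity
  nlinarith [sq_nonneg (u - z)]

lemma scalarProx_big (γ C z u : ℝ) (hγ : 0 < γ) (hC : 0 < C)
    (hz : Real.sqrt (2 * γ * C) < z) (hu : u ≤ 0) :
    γ * C < scalarProxObj γ C z u := by
  have hzpos : 0 < z := lt_of_le_of_lt (Real.sqrt_nonneg _) hz
  have hz2 : 2 * γ * C < z ^ 2 := by
    have := Real.sq_sqrt (by positivity : (0:ℝ) ≤ 2 * γ * C)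
    nlinarith [Real.sqrt_nonneg (2 * γ * C)]
  unfold scalarProxObj
  rw [if_neg (by linarith)]
  nlinarith [sq_nonneg u, mul_nonneg (neg_nonneg.mpr hu) hzpos.le]

/-- for `z ≤ 0` or `z > √(2γC)`, `u = z` is the unique global
minimizer of the scalar `L_{0/1}` proximal objective. -/
theorem scalarProx_identity_min (γ C z : ℝ) (hγ : 0 < γ) (hC : 0 < C)
    (hz : z ≤ 0 ∨ Real.sqrt (2 * γ * C) < z) :
    (∀ u : ℝ, scalarProxObj γ C z z ≤ scalarProxObj γ C z u) ∧
    (∀ u : ℝ, (∀ v : ℝ, scalarProxObj γ C z u ≤ scalarProxObj γ C z v) → u = z) := by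
  rcases hz with hz | hz
  · have hφz : scalarProxObj γ C z z = 0 := by
      unfold scalarProxObj
      rw [if_neg (by linarith)]
      ring
    constructor
    · intro u; rw [hφz]; exact scalarProxObj_nonneg γ C z u hγ hC
    · intro u hu
      have h := hu z
      rw [hφz] at h
      have h0 : scalarProxObj γ C z u = 0 :=
        le_antisymm h (scalarProxObj_nonneg γ C z u hγ hC)
      unfold scalarProxObj at h0
      by_cases hpos : 0 < u
      · rw [if_pos hpos] at h0; nlinarith [sq_nonneg (u - z)]
      · rw [if_neg hpos] at h0; nlinarith [sq_nonneg (u - z)]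
  · have hzpos : 0 < z := lt_of_le_of_lt (Real.sqrt_nonneg _) hz
    have hφz : scalarProxObj γ C z z = γ * C := by
      unfold scalarProxObj
      rw [if_pos hzpos]
      ring
    constructor
    · intro u
      rw [hφz]
      by_cases hpos : 0 < u
      · unfold scalarProxObj; rw [if_pos hpos]; nlinarith [sq_nonneg (u - z)]
      · exact (scalarProx_big γ C z u hγ hC hz (not_lt.mp hpos)).le
    · intro u hu
      have h := hu z
      rw [hφz] at h
      by_cases hpos : 0 < u
      · unfold scalarProxObj at h
        rw [if_pos hpos] at h
        nlinarith [sq_nonneg (u - z)]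
      · exact absurd h (not_le.mpr (scalarProx_big γ C z u hγ hC hz (not_lt.mp hpos)))
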